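/- Let λ > 0 and κ ∈ (0,1). Define p₀ = e^{−λ} and p_m = e^{−λ} ∑_{s=0}^{m−1} (λ^{s+1}/(s+1)!) C(m−1,s) κ^{m−s−1}(1−κ)^{s+1} for m ≥ 1. Then for every positive integer n, the n-th factorial moment satisfies ∑_{m=n}^∞ (m!/(m−n)!) · p_m = (κⁿ/(1−κ)ⁿ) · n! · ∑_{s=0}^{n−1} (1/(s+1)!) · C(n−1, s) · (λ/κ)^{s+1}. -/

import Mathlib

open Finset

/-- Auxiliary combinatorial identity:
`∑_{k≤a} C(a,k) C(b+1,k+1) C(k,y) = C(a,y) C(x,a+1)` when `x + y = a + b + 1`. -/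
private lemma inner_sum_aux (a b y x : ℕ) (hxy : x + y = a + b + 1) :
    ∑ k ∈ range (a + 1), a.choose k * ((b + 1).choose (k + 1) * k.choose y)
      = a.choose y * x.choose (a + 1) := by
  rcases le_or_gt y a with hy | hy
  · have hsub : Ico y (a + 1) ⊆ range (a + 1) := by
      rw [range_eq_Ico]
      exact Ico_subset_Ico (Nat.zero_le _) le_rfl
    rw [← Finset.sum_subset hsub (fun k hk hk2 => by
      rw [mem_range] at hk
      rw [mem_Ico] at hk2
      rw [Nat.choose_eq_zero_of_lt (by omega : k < y)]
      ring)]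
    rw [Finset.sum_Ico_eq_sum_range]
    have hlen : a + 1 - y = a - y + 1 := by omega
    rw [hlen]
    have hterm : ∀ e ∈ range (a - y + 1),
        a.choose (y + e) * ((b + 1).choose (y + e + 1) * (y + e).choose y)
          = a.choose y * ((a - y).choose e * (b + 1).choose (y + 1 + e)) := by
      intro e he
      rw [mem_range] at he
      have h2 := Nat.choose_mul (n := a) (k := y + e) (s := y) (by omega)
      have h3 : y + e - y = e := by omega
      rw [h3] at h2
      calc a.choose (y + e) * ((b + 1).choose (y + e + 1) * (y + e).choose y)
          = a.choose (y + e) * (y + e).choose y * (b + 1).choose (y + e + 1) := by ring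
        _ = a.choose y * (a - y).choose e * (b + 1).choose (y + e + 1) := by rw [h2]
        _ = a.choose y * ((a - y).choose e * (b + 1).choose (y + 1 + e)) := by
            rw [show y + e + 1 = y + 1 + e by omega]; ring
    rw [Finset.sum_congr rfl hterm, ← Finset.mul_sum]
    congr 1
    have hx : x = a - y + (b + 1) := by omega
    rw [hx, Nat.add_choose_eq, Finset.Nat.sum_antidiagonal_eq_sum_range_succ_mk]
    have hstep : ∑ u ∈ range (a + 1 + 1), (a - y).choose u * (b + 1).choose (a + 1 - u)
        = ∑ u ∈ range (a - y + 1), (a - y).choose u * (b + 1).choose (a + 1 - u) := by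
      refine (Finset.sum_subset (range_subset_range.mpr (by omega)) fun u hu hu2 => ?_).symm
      rw [mem_range] at hu2
      rw [Nat.choose_eq_zero_of_lt (by omega : a - y < u)]
      ring
    rw [hstep, ← Finset.sum_range_reflect]
    apply Finset.sum_congr rfl
    intro j hj
    rw [mem_range] at hj
    have e1 : a - y + 1 - 1 - j = a - y - j := by omega
    rw [e1]
    have e2 : y + 1 + (a - y - j) = a + 1 - j := by omega
    rw [e2, Nat.choose_symm (by omega : j ≤ a - y)]
  · rw [Finset.sum_eq_zero (fun k hk => by
      rw [mem_range] at hk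
      rw [Nat.choose_eq_zero_of_lt (by omega : k < y)]
      ring)]
    rw [Nat.choose_eq_zero_of_lt (by omega : a < y), zero_mul]

/-- The key combinatorial identity:
`C(N+1,a+1) C(N,b) = ∑_{k≤a} C(a,k) C(b+1,k+1) C(N+1+k, a+b+1)`. -/
private lemma key_identity (a b N : ℕ) :
    (N + 1).choose (a + 1) * N.choose b
      = ∑ k ∈ range (a + 1),
          a.choose k * ((b + 1).choose (k + 1) * (N + 1 + k).choose (a + b + 1)) := by
  have h1 : ∀ k, (N + 1 + k).choose (a + b + 1)
      = ∑ x ∈ range (a + b + 2), (N + 1).choose x * k.choose (a + b + 1 - x) := by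
    intro k
    rw [Nat.add_choose_eq, Finset.Nat.sum_antidiagonal_eq_sum_range_succ_mk]
  calc (N + 1).choose (a + 1) * N.choose b
      = (N + 1).choose (a + 1) * ∑ d ∈ range (b + 1), (N - a).choose d * a.choose (b - d) := by
        rcases le_or_gt a N with h | h
        · congr 1
          conv_lhs => rw [show N = N - a + a by omega]
          rw [Nat.add_choose_eq, Finset.Nat.sum_antidiagonal_eq_sum_range_succ_mk]
        · rw [Nat.choose_eq_zero_of_lt (by omega : N + 1 < a + 1), zero_mul, zero_mul]
    _ = ∑ d ∈ range (b + 1), (N + 1).choose (a + 1) * ((N - a).choose d * a.choose (b - d)) := by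
        rw [Finset.mul_sum]
    _ = ∑ x ∈ Ico (a + 1) (a + b + 2),
          (N + 1).choose x * x.choose (a + 1) * a.choose (a + b + 1 - x) := by
        rw [Finset.sum_Ico_eq_sum_range, show a + b + 2 - (a + 1) = b + 1 by omega]
        apply Finset.sum_congr rfl
        intro d hd
        rw [mem_range] at hd
        rw [show a + b + 1 - (a + 1 + d) = b - d by omega]
        rcases le_or_gt (a + 1 + d) (N + 1) with h | h
        · have h2 := Nat.choose_mul (n := N + 1) (k := a + 1 + d) (s := a + 1) (by omega)
          rw [show N + 1 - (a + 1) = N - a by omega, show a + 1 + d - (a + 1) = d by omega] at h2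
          rw [h2]; ring
        · have hz : (N + 1).choose (a + 1) * ((N - a).choose d * a.choose (b - d)) = 0 := by
            rcases le_or_gt (a + 1) (N + 1) with h3 | h3
            · rw [Nat.choose_eq_zero_of_lt (show N - a < d by omega)]; ring
            · rw [Nat.choose_eq_zero_of_lt h3]; ring
          rw [hz, Nat.choose_eq_zero_of_lt h]; ring
    _ = ∑ x ∈ range (a + b + 2),
          (N + 1).choose x * x.choose (a + 1) * a.choose (a + b + 1 - x) := by
        apply Finset.sum_subset
        · rw [range_eq_Ico]
          exact Ico_subset_Ico (Nat.zero_le _) le_rfl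
        · intro x hx hx2
          rw [mem_Ico] at hx2
          rw [mem_range] at hx
          rw [Nat.choose_eq_zero_of_lt (by omega : x < a + 1)]
          ring
    _ = ∑ x ∈ range (a + b + 2),
          (N + 1).choose x * (a.choose (a + b + 1 - x) * x.choose (a + 1)) := by
        apply Finset.sum_congr rfl; intro x _; ring
    _ = ∑ x ∈ range (a + b + 2), (N + 1).choose x *
          ∑ k ∈ range (a + 1), a.choose k * ((b + 1).choose (k + 1) * k.choose (a + b + 1 - x)) := by
        apply Finset.sum_congr rfl
        intro x hx
        rw [mem_range] at hx
        rw [inner_sum_aux a b (a + b + 1 - x) x (by omega)]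
    _ = ∑ x ∈ range (a + b + 2), ∑ k ∈ range (a + 1),
          a.choose k * ((b + 1).choose (k + 1) * ((N + 1).choose x * k.choose (a + b + 1 - x))) := by
        apply Finset.sum_congr rfl
        intro x _
        rw [Finset.mul_sum]
        exact Finset.sum_congr rfl fun k _ => by ring
    _ = ∑ k ∈ range (a + 1),
          a.choose k * ((b + 1).choose (k + 1) * (N + 1 + k).choose (a + b + 1)) := by
        rw [Finset.sum_comm]
        apply Finset.sum_congr rfl
        intro k _
        rw [h1 k, Finset.mul_sum, Finset.mul_sum]

/-- Shifted negative-binomial series. -/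
private lemma nb_shifted {κ : ℝ} (h0 : 0 ≤ κ) (h1 : κ < 1) (n s k : ℕ)
    (hkn : k + 1 ≤ n) (hks : k ≤ s) :
    HasSum (fun m : ℕ => ((m + n + k).choose (n + s) : ℝ) * κ ^ (m + n - 1 - s))
      (κ ^ (n - 1 - k) / (1 - κ) ^ (n + s + 1)) := by
  have hnorm : ‖κ‖ < 1 := by rwa [Real.norm_eq_abs, abs_of_nonneg h0]
  have base : HasSum (fun m : ℕ => ((m + (n + s)).choose (n + s) : ℝ) * κ ^ m)
      (1 / (1 - κ) ^ (n + s + 1)) := hasSum_choose_mul_geometric_of_norm_lt_one (n + s) hnorm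
  have base2 := base.mul_left (κ ^ (n - 1 - k))
  have key1 : ∀ m : ℕ, ((m + (s - k) + n + k).choose (n + s) : ℝ) * κ ^ (m + (s - k) + n - 1 - s)
      = κ ^ (n - 1 - k) * (((m + (n + s)).choose (n + s) : ℝ) * κ ^ m) := by
    intro m
    rw [show m + (s - k) + n + k = m + (n + s) by omega,
      show m + (s - k) + n - 1 - s = n - 1 - k + m by omega, pow_add]
    ring
  have h2 : HasSum (fun m : ℕ =>
      ((m + (s - k) + n + k).choose (n + s) : ℝ) * κ ^ (m + (s - k) + n - 1 - s))
      (κ ^ (n - 1 - k) * (1 / (1 - κ) ^ (n + s + 1))) := by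
    simpa only [key1] using base2
  have h3 := (hasSum_nat_add_iff
    (f := fun x : ℕ => ((x + n + k).choose (n + s) : ℝ) * κ ^ (x + n - 1 - s)) (s - k)).mp h2
  have hz : ∑ i ∈ range (s - k), ((i + n + k).choose (n + s) : ℝ) * κ ^ (i + n - 1 - s) = 0 := by
    apply Finset.sum_eq_zero
    intro i hi
    rw [mem_range] at hi
    rw [Nat.choose_eq_zero_of_lt (by omega : i + n + k < n + s)]
    simp
  rw [hz, add_zero] at h3
  rw [mul_one_div] at h3
  exact h3

theorem pds_one_factorial_moments (lam κ : ℝ) (hlam : 0 < lam)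
    (hκ : κ ∈ Set.Ioo (0 : ℝ) 1) (n : ℕ) (hn : 0 < n) :
    ∑' m : ℕ, ((Nat.factorial (m + n) : ℝ) / (Nat.factorial m)) *
        (Real.exp (-lam) * ∑ s ∈ Finset.range (m + n),
          lam ^ (s + 1) / (Nat.factorial (s + 1)) * (Nat.choose (m + n - 1) s) *
            κ ^ (m + n - 1 - s) * (1 - κ) ^ (s + 1))
      = κ ^ n / (1 - κ) ^ n * (Nat.factorial n) *
        ∑ s ∈ Finset.range n, (1 : ℝ) / (Nat.factorial (s + 1)) *
          (Nat.choose (n - 1) s) * (lam / κ) ^ (s + 1) := by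
  obtain ⟨hκ0, hκ1⟩ := hκ
  have hp0 : (0 : ℝ) < 1 - κ := by linarith
  have hκne : κ ≠ 0 := ne_of_gt hκ0
  have hpne : (1 : ℝ) - κ ≠ 0 := ne_of_gt hp0
  -- the double-indexed summand
  set f : ℕ → ℕ → ℝ := fun s m =>
    Real.exp (-lam) * (lam ^ (s + 1) / ((s + 1).factorial : ℝ)) * (((m + n - 1).choose s : ℕ) : ℝ) *
      κ ^ (m + n - 1 - s) * (1 - κ) ^ (s + 1) * (((m + n).factorial : ℝ) / (m.factorial : ℝ))
    with hf
  set W : ℕ → ℕ → ℝ := fun k s =>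
    (Real.exp (-lam) * (lam ^ (s + 1) / ((s + 1).factorial : ℝ)) * (1 - κ) ^ (s + 1) *
        ((n.factorial : ℝ) * ((((n - 1).choose k : ℕ) : ℝ) * (((s + 1).choose (k + 1) : ℕ) : ℝ)))) *
      (κ ^ (n - 1 - k) / (1 - κ) ^ (n + s + 1)) with hW
  set V : ℕ → ℝ := fun s => ∑ k ∈ range n, W k s with hV
  -- the key identity, cast to ℝ
  have hkeyN : ∀ s m : ℕ, (m + n).choose n * (m + n - 1).choose s
      = ∑ k ∈ range n, (n - 1).choose k * ((s + 1).choose (k + 1) * (m + n + k).choose (n + s)) := by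
    intro s m
    have h := key_identity (n - 1) s (m + n - 1)
    rw [show n - 1 + 1 = n by omega, show m + n - 1 + 1 = m + n by omega,
      show n - 1 + s + 1 = n + s by omega] at h
    exact h
  have hkeyR : ∀ s m : ℕ, (((m + n).factorial : ℝ) / (m.factorial : ℝ)) * (((m + n - 1).choose s : ℕ) : ℝ)
      = ∑ k ∈ range n, (n.factorial : ℝ) *
          ((((n - 1).choose k : ℕ) : ℝ) * ((((s + 1).choose (k + 1) : ℕ) : ℝ) * (((m + n + k).choose (n + s) : ℕ) : ℝ))) := by
    intro s m
    have hfac : (((m + n).choose n : ℕ) : ℝ) * (n.factorial : ℝ) * (m.factorial : ℝ)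
        = ((m + n).factorial : ℝ) := by
      have h := Nat.choose_mul_factorial_mul_factorial (Nat.le_add_left n m)
      rw [Nat.add_sub_cancel] at h
      exact_mod_cast h
    have hcast : (((m + n).choose n : ℕ) : ℝ) * (((m + n - 1).choose s : ℕ) : ℝ)
        = ∑ k ∈ range n, (((n - 1).choose k : ℕ) : ℝ) *
            ((((s + 1).choose (k + 1) : ℕ) : ℝ) * (((m + n + k).choose (n + s) : ℕ) : ℝ)) := by
      exact_mod_cast hkeyN s m
    have hmne : (m.factorial : ℝ) ≠ 0 := Nat.cast_ne_zero.mpr (Nat.factorial_ne_zero m)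
    calc (((m + n).factorial : ℝ) / (m.factorial : ℝ)) * (((m + n - 1).choose s : ℕ) : ℝ)
        = ((m + n).factorial : ℝ) * (((m + n - 1).choose s : ℕ) : ℝ) / (m.factorial : ℝ) := by
          ring
      _ = (((m + n).choose n : ℕ) : ℝ) * (n.factorial : ℝ) * (m.factorial : ℝ) *
            (((m + n - 1).choose s : ℕ) : ℝ) / (m.factorial : ℝ) := by rw [hfac]
      _ = (n.factorial : ℝ) * ((((m + n).choose n : ℕ) : ℝ) * (((m + n - 1).choose s : ℕ) : ℝ)) := by
          field_simp
      _ = (n.factorial : ℝ) * ∑ k ∈ range n, (((n - 1).choose k : ℕ) : ℝ) *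
            ((((s + 1).choose (k + 1) : ℕ) : ℝ) * (((m + n + k).choose (n + s) : ℕ) : ℝ)) := by
          rw [hcast]
      _ = _ := Finset.mul_sum _ _ _
  -- row sums
  have hrow : ∀ s, HasSum (f s) (V s) := by
    intro s
    have hfeq : f s = fun m => ∑ k ∈ range n,
        (Real.exp (-lam) * (lam ^ (s + 1) / ((s + 1).factorial : ℝ)) * (1 - κ) ^ (s + 1) *
            ((n.factorial : ℝ) * ((((n - 1).choose k : ℕ) : ℝ) * (((s + 1).choose (k + 1) : ℕ) : ℝ)))) *
          ((((m + n + k).choose (n + s) : ℕ) : ℝ) * κ ^ (m + n - 1 - s)) := by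
      funext m
      have h0 : f s m = (Real.exp (-lam) * (lam ^ (s + 1) / ((s + 1).factorial : ℝ)) *
          (1 - κ) ^ (s + 1)) *
          (κ ^ (m + n - 1 - s) *
            ((((m + n).factorial : ℝ) / (m.factorial : ℝ)) * (((m + n - 1).choose s : ℕ) : ℝ))) := by
        simp only [hf]; ring
      rw [h0, hkeyR s m, Finset.mul_sum, Finset.mul_sum]
      exact Finset.sum_congr rfl fun k _ => by ring
    rw [hfeq, hV]
    apply hasSum_sum
    intro k hk
    rw [mem_range] at hk
    rcases le_or_gt k s with hks | hks
    · exact (nb_shifted hκ0.le hκ1 n s k (by omega) hks).mul_left _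
    · have hz : (((s + 1).choose (k + 1) : ℕ) : ℝ) = 0 := by
        rw [Nat.choose_eq_zero_of_lt (by omega)]
        simp
      have hWz : W k s = 0 := by simp [hW, hz]
      rw [hWz]
      have hfun : (fun m : ℕ =>
          (Real.exp (-lam) * (lam ^ (s + 1) / ((s + 1).factorial : ℝ)) * (1 - κ) ^ (s + 1) *
              ((n.factorial : ℝ) * ((((n - 1).choose k : ℕ) : ℝ) * (((s + 1).choose (k + 1) : ℕ) : ℝ)))) *
            ((((m + n + k).choose (n + s) : ℕ) : ℝ) * κ ^ (m + n - 1 - s))) = fun _ => (0 : ℝ) := by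
        funext m
        rw [hz]
        ring
      rw [hfun]
      exact hasSum_zero
  -- exponential series
  have hexp : ∀ x : ℝ, HasSum (fun r : ℕ => x ^ r / (r.factorial : ℝ)) (Real.exp x) := by
    intro x
    rw [Real.exp_eq_exp_ℝ]
    exact NormedSpace.expSeries_div_hasSum_exp x
  -- column sums
  set E : ℕ → ℝ := fun k =>
    (Real.exp (-lam) * (n.factorial : ℝ) * (((n - 1).choose k : ℕ) : ℝ) * κ ^ (n - 1 - k) /
        (1 - κ) ^ n) * (lam ^ (k + 1) / (((k + 1).factorial : ℕ) : ℝ) * Real.exp lam) with hE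
  have hcol : ∀ k, HasSum (fun s => W k s) (E k) := by
    intro k
    set Cst : ℝ := Real.exp (-lam) * (n.factorial : ℝ) * (((n - 1).choose k : ℕ) : ℝ) *
        κ ^ (n - 1 - k) / (1 - κ) ^ n with hCst
    have hG : ∀ r : ℕ, (((r + k + 1).choose (k + 1) : ℕ) : ℝ) * lam ^ (r + k + 1) /
          (((r + k + 1).factorial : ℕ) : ℝ)
        = (lam ^ (k + 1) / (((k + 1).factorial : ℕ) : ℝ)) * (lam ^ r / ((r.factorial : ℕ) : ℝ)) := by
      intro r
      have hfacN := Nat.choose_mul_factorial_mul_factorial (show k + 1 ≤ r + k + 1 by omega)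
      rw [show r + k + 1 - (k + 1) = r by omega] at hfacN
      have hfac : (((r + k + 1).choose (k + 1) : ℕ) : ℝ) * (((k + 1).factorial : ℕ) : ℝ) *
          ((r.factorial : ℕ) : ℝ) = (((r + k + 1).factorial : ℕ) : ℝ) := by
        exact_mod_cast hfacN
      have hpow : lam ^ (r + k + 1) = lam ^ (k + 1) * lam ^ r := by
        rw [← pow_add]
        congr 1
        omega
      rw [hpow, div_mul_div_comm, div_eq_div_iff
        (Nat.cast_ne_zero.mpr (Nat.factorial_ne_zero _))
        (mul_ne_zero (Nat.cast_ne_zero.mpr (Nat.factorial_ne_zero _))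
          (Nat.cast_ne_zero.mpr (Nat.factorial_ne_zero _)))]
      linear_combination (lam ^ (k + 1) * lam ^ r) * hfac
    have h1 : HasSum (fun r : ℕ => (((r + k + 1).choose (k + 1) : ℕ) : ℝ) * lam ^ (r + k + 1) /
        (((r + k + 1).factorial : ℕ) : ℝ))
        (lam ^ (k + 1) / (((k + 1).factorial : ℕ) : ℝ) * Real.exp lam) := by
      simp only [hG]
      exact (hexp lam).mul_left _
    have h2 := (hasSum_nat_add_iff
      (f := fun s : ℕ => (((s + 1).choose (k + 1) : ℕ) : ℝ) * lam ^ (s + 1) /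
        (((s + 1).factorial : ℕ) : ℝ)) k).mp h1
    have hz : ∑ i ∈ range k, (((i + 1).choose (k + 1) : ℕ) : ℝ) * lam ^ (i + 1) /
        (((i + 1).factorial : ℕ) : ℝ) = 0 := by
      apply Finset.sum_eq_zero
      intro i hi
      rw [mem_range] at hi
      rw [Nat.choose_eq_zero_of_lt (by omega)]
      simp
    rw [hz, add_zero] at h2
    have h3 := h2.mul_left Cst
    have hWeq : (fun s => W k s) = fun s => Cst *
        ((((s + 1).choose (k + 1) : ℕ) : ℝ) * lam ^ (s + 1) / (((s + 1).factorial : ℕ) : ℝ)) := by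
      funext s
      simp only [hW, hCst]
      have hp2 : (1 - κ) ^ (n + s + 1) = (1 - κ) ^ n * (1 - κ) ^ (s + 1) := by
        rw [← pow_add, Nat.add_assoc]
      rw [hp2]
      field_simp
    rw [hWeq, hE]
    exact h3
  have hVsum : HasSum V (∑ k ∈ range n, E k) := by
    rw [hV]
    exact hasSum_sum fun k _ => hcol k
  -- nonnegativity and product summability
  have hnonneg : 0 ≤ Function.uncurry f := by
    refine Pi.le_def.mpr fun p => ?_
    simp only [Function.uncurry, hf, Pi.zero_apply]
    exact mul_nonneg (mul_nonneg (mul_nonneg (mul_nonneg (mul_nonneg (Real.exp_pos _).le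
      (div_nonneg (pow_nonneg hlam.le _) (Nat.cast_nonneg _))) (Nat.cast_nonneg _))
      (pow_nonneg hκ0.le _)) (pow_nonneg hp0.le _))
      (div_nonneg (Nat.cast_nonneg _) (Nat.cast_nonneg _))
  have hsum : Summable (Function.uncurry f) := by
    rw [summable_prod_of_nonneg hnonneg]
    constructor
    · intro s
      exact (hrow s).summable
    · have hEq : (fun s => ∑' m, Function.uncurry f (s, m)) = V :=
        funext fun s => (hrow s).tsum_eq
      rw [hEq]
      exact hVsum.summable
  -- final value of the column sums
  have hval : ∑ k ∈ range n, E k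
      = κ ^ n / (1 - κ) ^ n * (Nat.factorial n : ℝ) *
          ∑ s ∈ Finset.range n, (1 : ℝ) / (Nat.factorial (s + 1)) *
            (Nat.choose (n - 1) s) * (lam / κ) ^ (s + 1) := by
    rw [Finset.mul_sum]
    apply Finset.sum_congr rfl
    intro k hk
    rw [mem_range] at hk
    have hκn : κ ^ n = κ ^ (n - 1 - k) * κ ^ (k + 1) := by
      rw [← pow_add]
      congr 1
      omega
    have hfne : (((k + 1).factorial : ℕ) : ℝ) ≠ 0 := Nat.cast_ne_zero.mpr (Nat.factorial_ne_zero _)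
    simp only [hE]
    rw [hκn, Real.exp_neg, div_pow]
    field_simp
  -- assembling everything
  calc ∑' m : ℕ, ((Nat.factorial (m + n) : ℝ) / (Nat.factorial m)) *
        (Real.exp (-lam) * ∑ s ∈ Finset.range (m + n),
          lam ^ (s + 1) / (Nat.factorial (s + 1)) * (Nat.choose (m + n - 1) s) *
            κ ^ (m + n - 1 - s) * (1 - κ) ^ (s + 1))
      = ∑' m : ℕ, ∑' s : ℕ, f s m := by
        apply tsum_congr
        intro m
        have hvan : ∀ s ∉ range (m + n), f s m = 0 := by
          intro s hs
          rw [mem_range] at hs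
          simp only [hf]
          rw [Nat.choose_eq_zero_of_lt (by omega : m + n - 1 < s)]
          simp
        rw [tsum_eq_sum hvan, Finset.mul_sum, Finset.mul_sum]
        apply Finset.sum_congr rfl
        intro s _
        simp only [hf]
        ring
    _ = ∑' s : ℕ, ∑' m : ℕ, f s m := hsum.tsum_comm
    _ = ∑' s : ℕ, V s := tsum_congr fun s => (hrow s).tsum_eq
    _ = ∑ k ∈ range n, E k := hVsum.tsum_eq
    _ = _ := hval
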